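/- Let H be a connected finite simple graph and let G = H ∘ K₂ be the corona of H with K₂, with α = α(G). Then G is 2-quasi-regularizable and its order n satisfies n = 3α. -/

import Mathlib

open Finset
open scoped Classical

variable {V : Type*}

/-- `S` is an independent set in `G`: its vertices are pairwise non-adjacent. -/
def IsIndepSet (G : SimpleGraph V) (S : Finset V) : Prop :=
  ∀ ⦃u⦄, u ∈ S → ∀ ⦃v⦄, v ∈ S → ¬ G.Adj u v

/-- The neighborhood `N(S)`: all vertices having at least one neighbor in `S`. -/
noncomputable def neigh [Fintype V] (G : SimpleGraph V) (S : Finset V) : Finset V :=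
  Finset.univ.filter fun v => ∃ u ∈ S, G.Adj u v

/-- The independence number `α(G)`: the maximum size of an independent set. -/
noncomputable def indepNum [Fintype V] (G : SimpleGraph V) : ℕ :=
  (Finset.univ.filter fun S : Finset V => IsIndepSet G S).sup Finset.card

/-- `s_k`: the number of independent sets of size `k` in `G`. -/
noncomputable def indepCount [Fintype V] (G : SimpleGraph V) (k : ℕ) : ℕ :=
  (Finset.univ.filter fun S : Finset V => IsIndepSet G S ∧ S.card = k).card

/-- A maximal independent set (not properly contained in another independent set). -/
def IsMaximalIndepSet (G : SimpleGraph V) (S : Finset V) : Prop :=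
  IsIndepSet G S ∧ ∀ T : Finset V, IsIndepSet G T → S ⊆ T → S = T

/-- `G` is well-covered: all maximal independent sets have the same cardinality. -/
def IsWellCovered (G : SimpleGraph V) : Prop :=
  ∀ S T : Finset V, IsMaximalIndepSet G S → IsMaximalIndepSet G T → S.card = T.card

/-- `G` is 1-well-covered: it is well-covered, has at least two vertices, and
deleting any vertex leaves a well-covered graph. -/
def IsOneWellCovered [Fintype V] (G : SimpleGraph V) : Prop :=
  IsWellCovered G ∧ 2 ≤ Fintype.card V ∧
    ∀ v : V, IsWellCovered (G.induce ({v}ᶜ : Set V))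

/-- The corona `H ∘ K₂`: for each vertex `v` of `H`, two new vertices
(`(v, false)` and `(v, true)`) adjacent to each other and to `v` are added. -/
def corona2 (H : SimpleGraph V) : SimpleGraph (V ⊕ V × Bool) :=
  SimpleGraph.fromRel fun x y =>
    match x, y with
    | Sum.inl u, Sum.inl v => H.Adj u v
    | Sum.inl u, Sum.inr (v, _) => u = v
    | Sum.inr (u, _), Sum.inr (v, _) => u = v
    | _, _ => False


def proj2 : V ⊕ V × Bool → V
  | Sum.inl v => v
  | Sum.inr (v, _) => v

lemma corona2_adj_of_proj {H : SimpleGraph V} {x y : V ⊕ V × Bool}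
    (hne : x ≠ y) (hp : proj2 x = proj2 y) : (corona2 H).Adj x y := by
  refine ⟨hne, ?_⟩
  rcases x with v | ⟨v, b⟩ <;> rcases y with w | ⟨w, c⟩ <;>
    simp_all [proj2]

lemma indep_proj_injOn {H : SimpleGraph V} {S : Finset (V ⊕ V × Bool)}
    (hS : IsIndepSet (corona2 H) S) : Set.InjOn proj2 (S : Set (V ⊕ V × Bool)) := by
  intro x hx y hy hp
  by_contra hne
  exact hS hx hy (corona2_adj_of_proj hne hp)

def nbr2 : (V ⊕ V × Bool) → Bool → V ⊕ V × Bool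
  | Sum.inl v, b => Sum.inr (v, b)
  | Sum.inr (v, _), false => Sum.inl v
  | Sum.inr (v, c), true => Sum.inr (v, !c)

lemma nbr2_adj {H : SimpleGraph V} (x : V ⊕ V × Bool) (b : Bool) :
    (corona2 H).Adj x (nbr2 x b) := by
  rcases x with v | ⟨v, c⟩
  · exact ⟨by simp [nbr2], Or.inl rfl⟩
  · cases b
    · exact ⟨by simp [nbr2], Or.inr rfl⟩
    · refine ⟨?_, Or.inl rfl⟩
      simp [nbr2]

lemma nbr2_proj (x : V ⊕ V × Bool) (b : Bool) : proj2 (nbr2 x b) = proj2 x := by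
  rcases x with v | ⟨v, c⟩
  · rfl
  · cases b <;> rfl

lemma nbr2_ne (x : V ⊕ V × Bool) : nbr2 x false ≠ nbr2 x true := by
  rcases x with v | ⟨v, c⟩ <;> simp [nbr2]

lemma nbr2_inj (x : V ⊕ V × Bool) {b c : Bool} (h : nbr2 x b = nbr2 x c) : b = c := by
  cases b <;> cases c <;> first | rfl | exact absurd h (nbr2_ne x) | exact absurd h.symm (nbr2_ne x)

/-- If `H` is a connected graph and `G = H ∘ K₂` with `α = α(G)`,
then `G` is `2`-quasi-regularizable and its order `n` satisfies `n = 3α`. -/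
theorem stmt_12 {V : Type*} [Fintype V] (H : SimpleGraph V) (hconn : H.Connected)
    (G : SimpleGraph (V ⊕ V × Bool)) (hG : G = corona2 H)
    (alpha : ℕ) (ha : alpha = indepNum G) :
    (∀ S : Finset (V ⊕ V × Bool), IsIndepSet G S → 2 * S.card ≤ (neigh G S).card) ∧
    Fintype.card (V ⊕ V × Bool) = 3 * alpha := by
  subst hG ha
  have hcard : indepNum (corona2 H) = Fintype.card V := by
    apply le_antisymm
    · apply Finset.sup_le
      intro S hS
      simp only [Finset.mem_filter] at hS
      calc S.card = (S.image proj2).card :=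
            (Finset.card_image_of_injOn (indep_proj_injOn hS.2)).symm
        _ ≤ (Finset.univ : Finset V).card := Finset.card_le_card (Finset.subset_univ _)
        _ = Fintype.card V := Finset.card_univ
    · have hmem : (Finset.univ.image fun v : V => (Sum.inr (v, false) : V ⊕ V × Bool)) ∈
          Finset.univ.filter fun S : Finset (V ⊕ V × Bool) => IsIndepSet (corona2 H) S := by
        simp only [Finset.mem_filter, Finset.mem_univ, true_and]
        intro u hu v hv hadj
        simp only [Finset.mem_image, Finset.mem_univ, true_and] at hu hv
        obtain ⟨a, rfl⟩ := hu
        obtain ⟨b, rfl⟩ := hv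
        rcases hadj with ⟨hne, h | h⟩ <;> simp_all [corona2]
      have := Finset.le_sup (f := Finset.card) hmem
      rwa [Finset.card_image_of_injective _ (fun a b h => by simpa using h),
        Finset.card_univ] at this
  constructor
  · intro S hS
    have h2 : 2 * S.card = (S ×ˢ (Finset.univ : Finset Bool)).card := by
      rw [Finset.card_product, Finset.card_univ, Fintype.card_bool, Nat.mul_comm]
    rw [h2]
    apply Finset.card_le_card_of_injOn (fun p => nbr2 p.1 p.2)
    · rintro ⟨x, b⟩ hp
      simp only [Finset.mem_coe, Finset.mem_product, Finset.mem_univ, and_true] at hp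
      simp only [Finset.mem_coe, neigh, Finset.mem_filter, Finset.mem_univ, true_and]
      exact ⟨x, hp, nbr2_adj x b⟩
    · rintro ⟨x, b⟩ hx ⟨y, c⟩ hy h
      simp only [Finset.coe_product, Set.mem_prod, Finset.mem_coe] at hx hy
      have hproj : proj2 x = proj2 y := by
        simp only at h
        rw [← nbr2_proj x b, ← nbr2_proj y c, h]
      have hxy : x = y := indep_proj_injOn hS hx.1 hy.1 hproj
      subst hxy
      exact Prod.ext rfl (nbr2_inj x h)
  · simp only [Fintype.card_sum, Fintype.card_prod, Fintype.card_bool, hcard]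
    ring
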